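/- Let q ∈ L¹[0,1] be real-valued. If the first eigenvalue λ₀ of the periodic problem -y''+qy=λy, y(1)=y(0), y'(1)=y'(0) equals ∫₀¹ q(x) dx, then q(x) = λ₀ almost everywhere on [0,1]. -/

import Mathlib

open MeasureTheory intervalIntegral Complex

/-- The (real-valued) Rayleigh quotient of `y` for the operator `-y'' + q y` on `[0,1]`. -/
noncomputable def rayleighQuotientR (q : ℝ → ℝ) (y : ℝ → ℂ) : ℝ :=
  (∫ x in (0:ℝ)..1,
      ((-(starRingEnd ℂ) (y x) * deriv (deriv y) x).re + q x * ‖y x‖^2)) /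
  (∫ x in (0:ℝ)..1, ‖y x‖^2)

def PeriodicBC (y : ℝ → ℂ) : Prop := y 1 = y 0 ∧ deriv y 1 = deriv y 0

def IsEigenfunction (q : ℝ → ℝ) (lam : ℝ) (y : ℝ → ℂ) : Prop :=
  ContDiff ℝ 2 y ∧ (∃ x ∈ Set.Icc (0:ℝ) 1, y x ≠ 0) ∧ PeriodicBC y ∧
  ∀ᵐ x, x ∈ Set.Icc (0:ℝ) 1 → -deriv (deriv y) x + (q x : ℂ) * y x = (lam : ℂ) * y x

def IsEigenvalue (q : ℝ → ℝ) (lam : ℝ) : Prop := ∃ y, IsEigenfunction q lam y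

def IsFirstEigenvalue (q : ℝ → ℝ) (lam0 : ℝ) : Prop :=
  IsEigenvalue q lam0 ∧ ∀ lam, IsEigenvalue q lam → lam0 ≤ lam

/-- Algebra helper: if `0 ≤ 2εa + ε²b` for all small `ε`, then `a = 0`. -/
lemma aux_first_order_zero {a b δ : ℝ} (hδ : 0 < δ)
    (h : ∀ ε : ℝ, |ε| < δ → 0 ≤ 2 * ε * a + ε ^ 2 * b) : a = 0 := by
  by_contra ha
  have ha' : 0 < |a| := abs_pos.mpr ha
  set t : ℝ := min (δ / 2) (|a| / (|b| + 1)) with ht_def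
  have hb1 : (0:ℝ) < |b| + 1 := by positivity
  have ht0 : 0 < t := lt_min (by linarith) (by positivity)
  have htδ : t < δ := lt_of_le_of_lt (min_le_left _ _) (by linarith)
  have ht1 : t * (|b| + 1) ≤ |a| := by
    have := min_le_right (δ / 2) (|a| / (|b| + 1))
    calc t * (|b| + 1) ≤ (|a| / (|b| + 1)) * (|b| + 1) := by nlinarith
    _ = |a| := by field_simp
  have hbb : b ≤ |b| := le_abs_self b
  rcases lt_or_gt_of_ne ha with hneg | hpos
  · have habs : |a| = -a := abs_of_neg hneg
    have h1 := h t (by rw [abs_of_pos ht0]; exact htδ)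
    nlinarith [mul_le_mul_of_nonneg_left ht1 ht0.le, sq_nonneg t]
  · have habs : |a| = a := abs_of_pos hpos
    have h1 := h (-t) (by rw [abs_neg, abs_of_pos ht0]; exact htδ)
    nlinarith [mul_le_mul_of_nonneg_left ht1 ht0.le, sq_nonneg t]

set_option maxHeartbeats 2000000 in
/-- Key step: the first-order condition `∫ g (q - λ₀) = 0` for test functions supported
in `(0,1)`. -/
lemma aux_first_order (q : ℝ → ℝ) (hqI : IntervalIntegrable q volume 0 1) (lam0 : ℝ)
    (hvar : ∀ y : ℝ → ℂ, ContDiff ℝ 2 y → (∃ x ∈ Set.Icc (0:ℝ) 1, y x ≠ 0) →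
      PeriodicBC y → lam0 ≤ rayleighQuotientR q y)
    (heq : lam0 = ∫ x in (0:ℝ)..1, q x)
    (g : ℝ → ℝ) (hg : ContDiff ℝ ((⊤ : ℕ∞) : WithTop ℕ∞) g)
    (hsupp : tsupport g ⊆ Set.Ioo 0 1) :
    ∫ x in (0:ℝ)..1, g x * (q x - lam0) = 0 := by
  have hg2 : ContDiff ℝ 2 g := hg.of_le (WithTop.coe_le_coe.mpr le_top)
  have hgc : Continuous g := hg.continuous
  have hdiff : Differentiable ℝ g := hg2.differentiable two_ne_zero
  have hd1 : ∀ x, HasDerivAt g (deriv g x) x := fun x => (hdiff x).hasDerivAt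
  have hg' : ContDiff ℝ ((⊤ : ℕ∞) : WithTop ℕ∞) (deriv g) := (contDiff_infty_iff_deriv.mp hg).2
  have hgc' : Continuous (deriv g) := hg'.continuous
  have hdiff' : Differentiable ℝ (deriv g) := (contDiff_infty_iff_deriv.mp hg').1
  have hd2 : ∀ x, HasDerivAt (deriv g) (deriv (deriv g) x) x := fun x => (hdiff' x).hasDerivAt
  have hgc'' : Continuous (deriv (deriv g)) := (contDiff_infty_iff_deriv.mp hg').2.continuous
  -- compact support and bound
  have hCS : HasCompactSupport g :=
    HasCompactSupport.of_support_subset_isCompact isCompact_Icc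
      ((subset_tsupport g).trans (hsupp.trans Set.Ioo_subset_Icc_self))
  obtain ⟨C, hC⟩ := hCS.exists_bound_of_continuous hgc
  have hC' : ∀ x, |g x| ≤ C := by simpa [Real.norm_eq_abs] using hC
  have hC0 : 0 ≤ C := le_trans (abs_nonneg _) (hC' 0)
  -- boundary values
  have h0 : (0:ℝ) ∉ tsupport g := fun h => by simpa using (hsupp h).1
  have h1 : (1:ℝ) ∉ tsupport g := by
    intro h; exact absurd (hsupp h).2 (lt_irrefl 1)
  have hg0 : g 0 = 0 := image_eq_zero_of_notMem_tsupport h0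
  have hg1 : g 1 = 0 := image_eq_zero_of_notMem_tsupport h1
  have hdg0 : deriv g 0 = 0 :=
    Function.notMem_support.mp (fun hs => h0 (support_deriv_subset hs))
  have hdg1 : deriv g 1 = 0 :=
    Function.notMem_support.mp (fun hs => h1 (support_deriv_subset hs))
  -- the integrals appearing in the expansion
  set Ig : ℝ := ∫ x in (0:ℝ)..1, g x with hIg
  set Ig2 : ℝ := ∫ x in (0:ℝ)..1, g x ^ 2 with hIg2
  set Iqg : ℝ := ∫ x in (0:ℝ)..1, q x * g x with hIqg
  set Iqg2 : ℝ := ∫ x in (0:ℝ)..1, q x * g x ^ 2 with hIqg2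
  set Id2 : ℝ := ∫ x in (0:ℝ)..1, deriv g x ^ 2 with hId2
  have hIqgI : IntervalIntegrable (fun x => q x * g x) volume 0 1 :=
    hqI.mul_continuousOn hgc.continuousOn
  have hIqg2I : IntervalIntegrable (fun x => q x * g x ^ 2) volume 0 1 :=
    hqI.mul_continuousOn (hgc.pow 2).continuousOn
  -- ∫ g'' = 0 and ∫ g g'' = -∫ g'^2
  have hint_g'' : ∫ x in (0:ℝ)..1, deriv (deriv g) x = 0 := by
    rw [integral_deriv_eq_sub (fun x _ => hdiff' x) (hgc''.intervalIntegrable _ _)]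
    rw [hdg0, hdg1]; ring
  have hint_gg'' : ∫ x in (0:ℝ)..1, g x * deriv (deriv g) x = -Id2 := by
    rw [integral_mul_deriv_eq_deriv_mul (fun x _ => hd1 x) (fun x _ => hd2 x)
      (hgc'.intervalIntegrable _ _) (hgc''.intervalIntegrable _ _)]
    have h2 : (∫ x in (0:ℝ)..1, deriv g x * deriv g x) = Id2 := by
      rw [hId2]; apply intervalIntegral.integral_congr; intro x _; ring
    rw [hg0, hg1, h2]; ring
  -- the main per-ε inequality
  have hkey : ∀ ε : ℝ, |ε| < 1 / (C + 1) →
      0 ≤ 2 * ε * (Iqg - lam0 * Ig) + ε ^ 2 * (Id2 + Iqg2 - lam0 * Ig2) := by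
    intro ε hε
    set u : ℝ → ℝ := fun x => 1 + ε * g x with hu_def
    have upos : ∀ x, 0 < u x := by
      intro x
      have h1 : |ε| * |g x| ≤ |ε| * C := mul_le_mul_of_nonneg_left (hC' x) (abs_nonneg ε)
      have h2 : |ε| * C < 1 := by
        have : |ε| * (C + 1) < 1 := by
          rw [lt_div_iff₀ (by positivity)] at hε
          linarith [hε]
        nlinarith [abs_nonneg ε]
      have h3 : |ε * g x| < 1 := by rw [abs_mul]; linarith
      have := neg_abs_le (ε * g x)
      simp only [hu_def]; linarith
    set y : ℝ → ℂ := fun x => ((u x : ℝ) : ℂ) with hy_def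
    have hu_cd : ContDiff ℝ 2 u := contDiff_const.add (contDiff_const.mul hg2)
    have hy_cd : ContDiff ℝ 2 y := Complex.ofRealCLM.contDiff.comp hu_cd
    -- derivatives of y
    have hud : ∀ x, HasDerivAt u (ε * deriv g x) x := fun x =>
      ((hd1 x).const_mul ε).const_add 1
    have hyd : ∀ x, HasDerivAt y ((ε * deriv g x : ℝ) : ℂ) x := fun x => (hud x).ofReal_comp
    have hy' : deriv y = fun x => ((ε * deriv g x : ℝ) : ℂ) := funext fun x => (hyd x).deriv
    have hy'' : deriv (deriv y) = fun x => ((ε * deriv (deriv g) x : ℝ) : ℂ) := by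
      rw [hy']; exact funext fun x => (((hd2 x).const_mul ε).ofReal_comp).deriv
    -- boundary conditions
    have hbc : PeriodicBC y := by
      constructor
      · simp [hy_def, hu_def, hg0, hg1]
      · simp only [hy', hdg0, hdg1]
    have hnz : ∃ x ∈ Set.Icc (0:ℝ) 1, y x ≠ 0 := by
      refine ⟨0, by norm_num, ?_⟩
      simp only [hy_def, ne_eq, Complex.ofReal_eq_zero]
      exact (upos 0).ne'
    have hRQ := hvar y hy_cd hnz hbc
    -- rewrite the Rayleigh numerator integrand
    have hRint : ∀ x, (-(starRingEnd ℂ) (y x) * deriv (deriv y) x).re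
        + q x * ‖y x‖^2
        = (ε * (-(deriv (deriv g) x)) + ε ^ 2 * (-(g x * deriv (deriv g) x)))
          + (q x + (2 * ε * (q x * g x) + ε ^ 2 * (q x * g x ^ 2))) := by
      intro x
      simp only [hy'']
      simp only [hy'', hy_def, Complex.conj_ofReal, neg_mul, Complex.neg_re,
        ← Complex.ofReal_mul, Complex.ofReal_re, Complex.norm_real, Real.norm_eq_abs, _root_.sq_abs]
      simp only [hu_def]; ring
    -- the numerator
    have hNint1 : IntervalIntegrable
        (fun x => ε * (-(deriv (deriv g) x)) + ε ^ 2 * (-(g x * deriv (deriv g) x)))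
        volume 0 1 := by
      apply Continuous.intervalIntegrable; continuity
    have hNint2 : IntervalIntegrable
        (fun x => q x + (2 * ε * (q x * g x) + ε ^ 2 * (q x * g x ^ 2))) volume 0 1 :=
      hqI.add ((hIqgI.const_mul (2 * ε)).add (hIqg2I.const_mul (ε ^ 2)))
    have hN : (∫ x in (0:ℝ)..1, ((-(starRingEnd ℂ) (y x) * deriv (deriv y) x).re
        + q x * ‖y x‖^2))
        = (ε ^ 2 * Id2) + (lam0 + (2 * ε * Iqg + ε ^ 2 * Iqg2)) := by
      rw [intervalIntegral.integral_congr (fun x _ => hRint x), intervalIntegral.integral_add hNint1 hNint2]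
      congr 1
      · rw [intervalIntegral.integral_add (f := fun x => ε * -deriv (deriv g) x)
          (g := fun x => ε ^ 2 * -(g x * deriv (deriv g) x)) ((hgc''.neg.intervalIntegrable _ _).const_mul ε)
          (((hgc.mul hgc'').neg.intervalIntegrable _ _).const_mul (ε ^ 2)),
          intervalIntegral.integral_const_mul, intervalIntegral.integral_const_mul, intervalIntegral.integral_neg, intervalIntegral.integral_neg,
          hint_g'', hint_gg'']
        ring
      · rw [intervalIntegral.integral_add hqI ((hIqgI.const_mul (2 * ε)).add (hIqg2I.const_mul (ε ^ 2))),
          intervalIntegral.integral_add (hIqgI.const_mul (2 * ε)) (hIqg2I.const_mul (ε ^ 2)),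
          intervalIntegral.integral_const_mul, intervalIntegral.integral_const_mul, ← hIqg, ← hIqg2, ← heq]
    -- the denominator
    have hDint : ∀ x, ‖y x‖^2 = 1 + (2 * ε * g x + ε ^ 2 * g x ^ 2) := by
      intro x
      simp only [hy_def, Complex.norm_real, Real.norm_eq_abs, _root_.sq_abs]
      simp only [hu_def]; ring
    have hD : (∫ x in (0:ℝ)..1, ‖y x‖^2)
        = 1 + (2 * ε * Ig + ε ^ 2 * Ig2) := by
      rw [intervalIntegral.integral_congr (fun x _ => hDint x),
        intervalIntegral.integral_add (f := fun _ => (1:ℝ))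
          (g := fun x => 2 * ε * g x + ε ^ 2 * g x ^ 2) (intervalIntegrable_const)
          (((hgc.intervalIntegrable _ _).const_mul (2 * ε)).add
            (((hgc.pow 2).intervalIntegrable _ _).const_mul (ε ^ 2))),
        intervalIntegral.integral_add (f := fun x => 2 * ε * g x)
          (g := fun x => ε ^ 2 * g x ^ 2) ((hgc.intervalIntegrable _ _).const_mul (2 * ε))
          (((hgc.pow 2).intervalIntegrable _ _).const_mul (ε ^ 2)),
        intervalIntegral.integral_const_mul, intervalIntegral.integral_const_mul, ← hIg, ← hIg2]
      simp
    have hDpos : 0 < ∫ x in (0:ℝ)..1, ‖y x‖^2 := by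
      apply intervalIntegral_pos_of_pos_on
      · apply Continuous.intervalIntegrable
        exact (continuous_norm.comp (Complex.continuous_ofReal.comp
          (continuous_const.add (continuous_const.mul hgc)))).pow 2
      · intro x _
        have : ‖y x‖ = |u x| := by simp [hy_def, Complex.norm_real]
        rw [this, _root_.sq_abs]
        exact pow_pos (upos x) 2
      · norm_num
    -- put it together
    rw [rayleighQuotientR, le_div_iff₀ hDpos] at hRQ
    rw [hN, hD] at hRQ
    ring_nf at hRQ ⊢
    linarith [hRQ]
  -- conclude from the algebra lemma
  have hA : Iqg - lam0 * Ig = 0 :=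
    aux_first_order_zero (by positivity) hkey
  have : ∫ x in (0:ℝ)..1, g x * (q x - lam0) = Iqg - lam0 * Ig := by
    have hfun : ∀ x, g x * (q x - lam0) = q x * g x - lam0 * g x := fun x => by ring
    rw [intervalIntegral.integral_congr (fun x _ => hfun x),
      intervalIntegral.integral_sub hIqgI ((hgc.intervalIntegrable _ _).const_mul lam0),
      intervalIntegral.integral_const_mul, ← hIqg, ← hIg]
  rw [this, hA]

/-- Yurko, Theorem 2(a): if the first eigenvalue `λ₀` of the periodic
problem equals `∫₀¹ q`, then `q = λ₀` a.e. -/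
theorem ambarzumyan_periodic (q : ℝ → ℝ)
    (hq : IntegrableOn q (Set.Icc (0:ℝ) 1))
    (lam0 : ℝ) (hfirst : IsFirstEigenvalue q lam0)
    (hvar : ∀ y : ℝ → ℂ, ContDiff ℝ 2 y → (∃ x ∈ Set.Icc (0:ℝ) 1, y x ≠ 0) →
      PeriodicBC y → lam0 ≤ rayleighQuotientR q y)
    (heq : lam0 = ∫ x in (0:ℝ)..1, q x) :
    ∀ᵐ x, x ∈ Set.Icc (0:ℝ) 1 → q x = lam0 := by
  have hqI : IntervalIntegrable q volume 0 1 := by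
    rw [intervalIntegrable_iff_integrableOn_Icc_of_le zero_le_one]
    exact hq
  -- a.e. vanishing on the open interval
  have hloc : LocallyIntegrableOn (fun x => q x - lam0) (Set.Ioo 0 1) volume := by
    apply IntegrableOn.locallyIntegrableOn
    exact (hq.mono_set Set.Ioo_subset_Icc_self).sub
      (integrableOn_const (by simp [Real.volume_Ioo]))
  have hae : ∀ᵐ x, x ∈ Set.Ioo (0:ℝ) 1 → q x - lam0 = 0 := by
    apply isOpen_Ioo.ae_eq_zero_of_integral_contDiff_smul_eq_zero hloc
    intro g g_diff g_supp g_tsupp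
    have hzero : ∀ x, x ∉ Set.Ioo (0:ℝ) 1 → g x • (q x - lam0) = 0 := by
      intro x hx
      rw [image_eq_zero_of_notMem_tsupport (fun h => hx (g_tsupp h)), zero_smul]
    have h1 : ∫ x, g x • (q x - lam0)
        = ∫ x in Set.Ioo (0:ℝ) 1, g x • (q x - lam0) :=
      (setIntegral_eq_integral_of_forall_compl_eq_zero hzero).symm
    rw [h1]
    have h2 : ∫ x in Set.Ioo (0:ℝ) 1, g x • (q x - lam0)
        = ∫ x in (0:ℝ)..1, g x * (q x - lam0) := by
      rw [intervalIntegral.integral_of_le zero_le_one, ← integral_Ioc_eq_integral_Ioo]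
      simp [smul_eq_mul]
    rw [h2]
    exact aux_first_order q hqI lam0 hvar heq g g_diff g_tsupp
  have h0 : ∀ᵐ x : ℝ, x ≠ 0 := by
    rw [ae_iff]
    convert Real.volume_singleton (a := 0) using 2
    ext x; simp
  have h1 : ∀ᵐ x : ℝ, x ≠ 1 := by
    rw [ae_iff]
    convert Real.volume_singleton (a := 1) using 2
    ext x; simp
  filter_upwards [hae, h0, h1] with x hx hx0 hx1 hxIcc
  have : x ∈ Set.Ioo (0:ℝ) 1 :=
    ⟨lt_of_le_of_ne hxIcc.1 (Ne.symm hx0), lt_of_le_of_ne hxIcc.2 hx1⟩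
  have := hx this
  linarith
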